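/- Let d ≥ 1, Δ ⊂ Z^d finite, and c ≥ 0. Let C' > 0 be a constant such that Σ_{j∈Δ} γ_{k−j} ≤ C'·γ_k for all k ∈ Z^d. Let (u_i)_{i∈Z^d} be a family of measurable functions u_i : [0,1] → [0,∞) and (A_i)_{i∈Z^d} nonnegative reals such that: (a) u_i(t) ≤ A_i + c·Σ_{k ∈ i+Δ} ∫_0^t u_k(s) ds for all i ∈ Z^d and t ∈ [0,1]; (b) Σ_{i∈Z^d} γ_i A_i < ∞; and (c) the function t ↦ Σ_{i∈Z^d} γ_i u_i(t) is bounded on [0,1]. Then for every t ∈ [0,1]: Σ_{i∈Z^d} γ_i u_i(t) ≤ (Σ_{i∈Z^d} γ_i A_i)·e^{cC't}. -/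

import Mathlib

/-- The lattice `ℤ^d`. -/
abbrev Zd (d : ℕ) := Fin d → ℤ

/-- The maximum norm `|i| = max_l |i_l|` on `ℤ^d`. -/
def mnorm {d : ℕ} (i : Zd d) : ℕ :=
  Finset.univ.sup fun l => (i l).natAbs

/-- The weight `γ_i = (1 + |i|)^{-(d+1)}`. -/
noncomputable def gam {d : ℕ} (i : Zd d) : ℝ :=
  ((1 + (mnorm i : ℝ)) ^ (d + 1))⁻¹

open MeasureTheory intervalIntegral in
/-- A weighted Gronwall-type lemma: if the nonnegative functions `u_i`
satisfy `u_i(t) ≤ A_i + c Σ_{k∈i+Δ} ∫_0^t u_k(s) ds` on `[0,1]`, with `Σ γ_i A_i < ∞` and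
`t ↦ Σ γ_i u_i(t)` bounded, then `Σ γ_i u_i(t) ≤ (Σ γ_i A_i) e^{cC't}` for `t ∈ [0,1]`,
where `C'` dominates `Σ_{j∈Δ} γ_{k−j} ≤ C' γ_k`. -/
theorem weighted_gronwall (d : ℕ) (hd : 1 ≤ d) (Δ : Finset (Zd d))
    (c : ℝ) (hc : 0 ≤ c) (C' : ℝ) (hC' : 0 < C')
    (hdom : ∀ k : Zd d, ∑ j ∈ Δ, gam (k - j) ≤ C' * gam k)
    (u : Zd d → ℝ → ℝ) (humeas : ∀ i, Measurable (u i))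
    (hunonneg : ∀ i : Zd d, ∀ t ∈ Set.Icc (0 : ℝ) 1, 0 ≤ u i t)
    (A : Zd d → ℝ) (hA : ∀ i, 0 ≤ A i)
    (hrec : ∀ i : Zd d, ∀ t ∈ Set.Icc (0 : ℝ) 1,
      u i t ≤ A i + c * ∑ j ∈ Δ, ∫ s in (0 : ℝ)..t, u (i + j) s)
    (hAsum : Summable (fun i : Zd d => gam i * A i))
    (hbdd : ∃ B : ℝ, ∀ t ∈ Set.Icc (0 : ℝ) 1,
      Summable (fun i : Zd d => gam i * u i t) ∧ (∑' i : Zd d, gam i * u i t) ≤ B) :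
    ∀ t ∈ Set.Icc (0 : ℝ) 1,
      (∑' i : Zd d, gam i * u i t)
        ≤ (∑' i : Zd d, gam i * A i) * Real.exp (c * C' * t) := by
  classical
  obtain ⟨B, hB⟩ := hbdd
  set a : ℝ := ∑' i : Zd d, gam i * A i with ha
  set K : ℝ := c * C' with hKdef
  have hK0 : 0 ≤ K := mul_nonneg hc hC'.le
  have hgpos : ∀ i : Zd d, 0 < gam i := by
    intro i
    unfold gam
    positivity
  have ha0 : 0 ≤ a := tsum_nonneg fun i => mul_nonneg (hgpos i).le (hA i)
  have hterm : ∀ t ∈ Set.Icc (0:ℝ) 1, ∀ i, 0 ≤ gam i * u i t :=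
    fun t ht i => mul_nonneg (hgpos i).le (hunonneg i t ht)
  have h01 : (0:ℝ) ∈ Set.Icc (0:ℝ) 1 := ⟨le_refl 0, zero_le_one⟩
  have hB0 : 0 ≤ B := le_trans (tsum_nonneg (hterm 0 h01)) (hB 0 h01).2
  -- pointwise bound on u i
  have hub : ∀ i, ∀ s ∈ Set.Icc (0:ℝ) 1, u i s ≤ B / gam i := by
    intro i s hs
    have h1 : gam i * u i s ≤ B :=
      le_trans (Summable.le_tsum (hB s hs).1 i (fun j _ => hterm s hs j)) (hB s hs).2
    rw [le_div_iff₀ (hgpos i), mul_comm]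
    exact h1
  -- interval integrability of each u i
  have hint : ∀ i, ∀ t ∈ Set.Icc (0:ℝ) 1, IntervalIntegrable (u i) volume 0 t := by
    intro i t ht
    rw [intervalIntegrable_iff, Set.uIoc_of_le ht.1]
    apply Integrable.mono' (integrable_const (B / gam i))
      ((humeas i).aestronglyMeasurable.restrict)
    filter_upwards [ae_restrict_mem measurableSet_Ioc] with s hs
    have hs1 : s ∈ Set.Icc (0:ℝ) 1 := ⟨hs.1.le, hs.2.trans ht.2⟩
    rw [Real.norm_of_nonneg (hunonneg i s hs1)]
    exact hub i s hs1
  -- nonnegativity of the integrals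
  have hinn : ∀ t ∈ Set.Icc (0:ℝ) 1, ∀ k : Zd d, 0 ≤ ∫ s in (0:ℝ)..t, u k s := by
    intro t ht k
    exact intervalIntegral.integral_nonneg ht.1
      (fun s hs => hunonneg k s ⟨hs.1, hs.2.trans ht.2⟩)
  -- L1 : finite weighted sums of integrals are dominated by the integral of a majorant
  have L1 : ∀ (g : ℝ → ℝ), Continuous g →
      (∀ s ∈ Set.Icc (0:ℝ) 1, (∑' k : Zd d, gam k * u k s) ≤ g s) →
      ∀ t ∈ Set.Icc (0:ℝ) 1, ∀ F : Finset (Zd d),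
        ∑ k ∈ F, gam k * ∫ s in (0:ℝ)..t, u k s ≤ ∫ s in (0:ℝ)..t, g s := by
    intro g hg hφ t ht F
    have hintF : ∀ k ∈ F, IntervalIntegrable (fun s => gam k * u k s) volume 0 t :=
      fun k _ => (hint k t ht).const_mul _
    have e1 : ∑ k ∈ F, gam k * ∫ s in (0:ℝ)..t, u k s
        = ∫ s in (0:ℝ)..t, ∑ k ∈ F, gam k * u k s := by
      rw [intervalIntegral.integral_finset_sum hintF]
      exact Finset.sum_congr rfl fun k _ => (intervalIntegral.integral_const_mul _ _).symm
    rw [e1]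
    apply intervalIntegral.integral_mono_on ht.1 _ (hg.intervalIntegrable _ _)
    · intro s hs
      have hs1 : s ∈ Set.Icc (0:ℝ) 1 := ⟨hs.1, hs.2.trans ht.2⟩
      exact le_trans (Summable.sum_le_tsum F (fun k _ => hterm s hs1 k) (hB s hs1).1) (hφ s hs1)
    · have h5 : IntervalIntegrable (∑ k ∈ F, fun s => gam k * u k s) volume 0 t :=
        IntervalIntegrable.sum F hintF
      have e5 : (∑ k ∈ F, fun s => gam k * u k s) = fun s => ∑ k ∈ F, gam k * u k s := by
        funext s; simp
      rwa [e5] at h5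
  -- L3 : the core integral inequality with a continuous majorant
  have L3 : ∀ (g : ℝ → ℝ), Continuous g →
      (∀ s ∈ Set.Icc (0:ℝ) 1, (∑' i : Zd d, gam i * u i s) ≤ g s) →
      ∀ t ∈ Set.Icc (0:ℝ) 1,
        (∑' i : Zd d, gam i * u i t) ≤ a + K * ∫ s in (0:ℝ)..t, g s := by
    intro g hg hφ t ht
    have hTps : ∀ F : Finset (Zd d),
        ∑ i ∈ F, (∑ j ∈ Δ, gam i * ∫ s in (0:ℝ)..t, u (i + j) s)
          ≤ C' * ∫ s in (0:ℝ)..t, g s := by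
      intro F
      set F' : Finset (Zd d) := Finset.image₂ (· + ·) F Δ with hF'
      have step1 : ∀ j ∈ Δ, ∑ i ∈ F, gam i * ∫ s in (0:ℝ)..t, u (i + j) s
          ≤ ∑ k ∈ F', gam (k - j) * ∫ s in (0:ℝ)..t, u k s := by
        intro j hj
        have e2 : ∑ i ∈ F, gam i * ∫ s in (0:ℝ)..t, u (i + j) s
            = ∑ k ∈ F.image (· + j), gam (k - j) * ∫ s in (0:ℝ)..t, u k s := by
          rw [Finset.sum_image (fun x _ y _ h => by exact add_right_cancel h)]
          simp [add_sub_cancel_right]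
        rw [e2]
        apply Finset.sum_le_sum_of_subset_of_nonneg
        · intro k hk
          obtain ⟨i, hi, rfl⟩ := Finset.mem_image.mp hk
          exact Finset.mem_image₂_of_mem hi hj
        · intro k _ _
          exact mul_nonneg (hgpos _).le (hinn t ht k)
      calc ∑ i ∈ F, ∑ j ∈ Δ, gam i * ∫ s in (0:ℝ)..t, u (i + j) s
          = ∑ j ∈ Δ, ∑ i ∈ F, gam i * ∫ s in (0:ℝ)..t, u (i + j) s := Finset.sum_comm
        _ ≤ ∑ j ∈ Δ, ∑ k ∈ F', gam (k - j) * ∫ s in (0:ℝ)..t, u k s :=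
            Finset.sum_le_sum step1
        _ = ∑ k ∈ F', (∑ j ∈ Δ, gam (k - j)) * ∫ s in (0:ℝ)..t, u k s := by
            rw [Finset.sum_comm]
            exact Finset.sum_congr rfl fun k _ => (Finset.sum_mul _ _ _).symm
        _ ≤ ∑ k ∈ F', (C' * gam k) * ∫ s in (0:ℝ)..t, u k s :=
            Finset.sum_le_sum fun k _ =>
              mul_le_mul_of_nonneg_right (hdom k) (hinn t ht k)
        _ = C' * ∑ k ∈ F', gam k * ∫ s in (0:ℝ)..t, u k s := by
            rw [Finset.mul_sum]
            exact Finset.sum_congr rfl fun k _ => by ring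
        _ ≤ C' * ∫ s in (0:ℝ)..t, g s :=
            mul_le_mul_of_nonneg_left (L1 g hg hφ t ht F') hC'.le
    have hTnn : ∀ i : Zd d, 0 ≤ ∑ j ∈ Δ, gam i * ∫ s in (0:ℝ)..t, u (i + j) s :=
      fun i => Finset.sum_nonneg fun j _ => mul_nonneg (hgpos _).le (hinn t ht _)
    have hTsum : Summable (fun i : Zd d => ∑ j ∈ Δ, gam i * ∫ s in (0:ℝ)..t, u (i + j) s) :=
      summable_of_sum_le hTnn hTps
    have hT : (∑' i : Zd d, ∑ j ∈ Δ, gam i * ∫ s in (0:ℝ)..t, u (i + j) s)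
        ≤ C' * ∫ s in (0:ℝ)..t, g s := Summable.tsum_le_of_sum_le hTsum hTps
    have h1 : (∑' i : Zd d, gam i * u i t)
        ≤ ∑' i : Zd d, (gam i * A i + c * ∑ j ∈ Δ, gam i * ∫ s in (0:ℝ)..t, u (i + j) s) := by
      apply Summable.tsum_le_tsum _ (hB t ht).1 (hAsum.add (hTsum.mul_left c))
      intro i
      have h2 : gam i * u i t
          ≤ gam i * (A i + c * ∑ j ∈ Δ, ∫ s in (0:ℝ)..t, u (i + j) s) :=
        mul_le_mul_of_nonneg_left (hrec i t ht) (hgpos i).le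
      calc gam i * u i t ≤ gam i * (A i + c * ∑ j ∈ Δ, ∫ s in (0:ℝ)..t, u (i + j) s) := h2
        _ = gam i * A i + c * ∑ j ∈ Δ, gam i * ∫ s in (0:ℝ)..t, u (i + j) s := by
            rw [mul_add, mul_left_comm, Finset.mul_sum]
    rw [Summable.tsum_add hAsum (hTsum.mul_left c), tsum_mul_left] at h1
    calc (∑' i : Zd d, gam i * u i t)
        ≤ a + c * ∑' i : Zd d, ∑ j ∈ Δ, gam i * ∫ s in (0:ℝ)..t, u (i + j) s := h1
      _ ≤ a + c * (C' * ∫ s in (0:ℝ)..t, g s) :=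
          add_le_add_right (mul_le_mul_of_nonneg_left hT hc) a
      _ = a + K * ∫ s in (0:ℝ)..t, g s := by rw [hKdef]; ring
  rcases eq_or_lt_of_le hK0 with hKz | hKpos
  · -- case K = 0
    intro t ht
    have h := L3 (fun _ => B) continuous_const (fun s hs => (hB s hs).2) t ht
    rw [← hKz] at h
    simpa [← hKz] using h
  · -- case K > 0 : induction on the Picard iterates
    have L4 : ∀ n : ℕ, ∀ t ∈ Set.Icc (0:ℝ) 1,
        (∑' i : Zd d, gam i * u i t)
          ≤ a * Real.exp (K * t) + B * (K * t) ^ n / n.factorial := by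
      intro n
      induction n with
      | zero =>
        intro t ht
        have h := (hB t ht).2
        have he : (0:ℝ) < Real.exp (K * t) := Real.exp_pos _
        simp only [pow_zero, Nat.factorial_zero, Nat.cast_one, mul_one, div_one]
        nlinarith
      | succ n ih =>
        intro t ht
        set g : ℝ → ℝ := fun s => a * Real.exp (K * s) + B * (K * s) ^ n / n.factorial
          with hgdef
        have hgc : Continuous g := by
          apply Continuous.add
          · exact continuous_const.mul (Real.continuous_exp.comp (continuous_const.mul continuous_id))
          · exact (continuous_const.mul ((continuous_const.mul continuous_id).pow n)).div_const _
        have hcore := L3 g hgc (fun s hs => ih s hs) t ht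
        have hI : ∫ s in (0:ℝ)..t, g s
            = a * (K⁻¹ * (Real.exp (K * t) - 1))
              + B * K ^ n / n.factorial * (t ^ (n + 1) / (n + 1)) := by
          rw [hgdef]
          rw [intervalIntegral.integral_add]
          · congr 1
            · rw [intervalIntegral.integral_const_mul]
              rw [intervalIntegral.integral_comp_mul_left Real.exp (ne_of_gt hKpos)]
              simp [integral_exp, smul_eq_mul]
            · have e3 : ∀ s : ℝ, B * (K * s) ^ n / (n.factorial : ℝ)
                  = (B * K ^ n / n.factorial) * s ^ n := by
                intro s; rw [mul_pow]; ring
              simp_rw [e3]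
              rw [intervalIntegral.integral_const_mul, integral_pow]
              ring
          · exact (continuous_const.mul (Real.continuous_exp.comp
              (continuous_const.mul continuous_id))).intervalIntegrable _ _
          · exact ((continuous_const.mul
              ((continuous_const.mul continuous_id).pow n)).div_const _).intervalIntegrable _ _
        rw [hI] at hcore
        have hfact : ((n + 1).factorial : ℝ) = ((n : ℝ) + 1) * n.factorial := by
          rw [Nat.factorial_succ]; push_cast; ring
        have hfne : (n.factorial : ℝ) ≠ 0 := Nat.cast_ne_zero.mpr n.factorial_ne_zero
        have hn1 : ((n : ℝ) + 1) ≠ 0 := by positivity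
        have hKne : K ≠ 0 := ne_of_gt hKpos
        calc (∑' i : Zd d, gam i * u i t)
            ≤ a + K * (a * (K⁻¹ * (Real.exp (K * t) - 1))
              + B * K ^ n / n.factorial * (t ^ (n + 1) / (n + 1))) := hcore
          _ = a * Real.exp (K * t) + B * (K * t) ^ (n + 1) / (n + 1).factorial := by
              rw [hfact, mul_pow]
              field_simp
              ring
    intro t ht
    have hlim : Filter.Tendsto
        (fun n : ℕ => a * Real.exp (K * t) + B * (K * t) ^ n / n.factorial)
        Filter.atTop (nhds (a * Real.exp (K * t))) := by
      have h0 := FloorSemiring.tendsto_pow_div_factorial_atTop (K * t)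
      have h1 := h0.const_mul B
      simp only [mul_zero] at h1
      have := Filter.Tendsto.add (tendsto_const_nhds
        (x := a * Real.exp (K * t)) (f := Filter.atTop (α := ℕ))) h1
      simpa [mul_div_assoc] using this
    exact ge_of_tendsto hlim (Filter.Eventually.of_forall fun n => L4 n t ht)
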